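/- In a finite directed graph in which every vertex has a self-loop, a quantum walk can be implemented on the graph if and only if the graph is reversible. Here a quantum walk is a unitary W on a finite-dimensional Hilbert space together with an assignment of a nonempty finite set of orthonormal basis states to each vertex (the sets for distinct vertices disjoint, together spanning the space), such that for all vertices i, j: i → j if and only if some matrix entry of W from a basis state of i to a basis state of j is nonzero. -/

import Mathlib

lemma qw_cycle_fun {V : Type*} {Adj : V → V → Prop} {i j : V}
    (hij : Adj i j) (h : Relation.ReflTransGen Adj j i) :
    ∃ (n : ℕ) (g : Fin (n + 1) → V),
      (∀ t, Adj (g t) (g (finRotate (n + 1) t))) ∧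
      ∃ t, g t = i ∧ g (finRotate (n + 1) t) = j := by
  obtain ⟨l, hl1, hl2⟩ := List.exists_isChain_cons_of_relationReflTransGen h
  set c : List V := j :: l with hc
  have hlen : c.length = l.length + 1 := by simp [hc]
  have hget : ∀ (t : Fin (l.length + 1)), ∃ h', c.get (Fin.cast hlen.symm t) = c.get ⟨t.val, h'⟩ := by
    intro t; exact ⟨by omega, rfl⟩
  have hlastget : c.get ⟨l.length, by omega⟩ = i := by
    rw [List.getLast_eq_getElem] at hl2
    simpa [hc] using hl2
  have hheadget : c.get ⟨0, by omega⟩ = j := rfl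
  refine ⟨l.length, fun t => c.get ⟨t.val, by omega⟩, ?_, ?_⟩
  · intro t
    have hchain : List.Chain' Adj c := hl1
    rcases eq_or_lt_of_le (Nat.lt_succ_iff.mp t.isLt) with hlast | hlt
    · have ht1 : ((finRotate (l.length + 1) t : Fin _) : ℕ) = 0 := by
        rw [finRotate_succ_apply, Fin.add_def]
        simp [hlast]
      show Adj (c.get ⟨t.val, by omega⟩) (c.get ⟨(finRotate (l.length + 1) t).val, by omega⟩)
      simp only [ht1, hlast, hlastget, hheadget]
      exact hij
    · have ht1 : ((finRotate (l.length + 1) t : Fin _) : ℕ) = (t : ℕ) + 1 := by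
        rw [finRotate_succ_apply, Fin.add_def]
        simp [Nat.mod_eq_of_lt (by omega : (t : ℕ) + 1 < l.length + 1)]
      show Adj (c.get ⟨t.val, by omega⟩) (c.get ⟨(finRotate (l.length + 1) t).val, by omega⟩)
      have := List.isChain_iff_getElem.mp hchain t.val (by simp [hc]; omega)
      simp only [ht1]
      exact this
  · refine ⟨Fin.last _, ?_, ?_⟩
    · exact hlastget
    · have ht1 : ((finRotate (l.length + 1) (Fin.last _) : Fin _) : ℕ) = 0 := by
        rw [finRotate_succ_apply, Fin.add_def]
        simp
      show c.get ⟨(finRotate (l.length + 1) (Fin.last _)).val, by omega⟩ = j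
      simp only [ht1]
      exact hheadget

theorem quantum_walk_iff_reversible {V : Type*} [Fintype V]
    (Adj : V → V → Prop) (hloop : ∀ v, Adj v v) :
    (∃ (N : ℕ) (f : Fin N → V) (W : Matrix (Fin N) (Fin N) ℂ),
        Function.Surjective f ∧ W ∈ unitary (Matrix (Fin N) (Fin N) ℂ) ∧
        ∀ i j : V, Adj i j ↔ ∃ k l : Fin N, f k = i ∧ f l = j ∧ W l k ≠ 0) ↔
    (∀ i j : V, Adj i j → Relation.ReflTransGen Adj j i) := by
  classical
  constructor
  · rintro ⟨N, f, W, hf, hW, hWA⟩ i j hij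
    by_contra hrev
    obtain ⟨h1, h2⟩ := hW
    set S : Finset (Fin N) := Finset.univ.filter (fun k => Relation.ReflTransGen Adj j (f k))
      with hSdef
    have hmemS : ∀ k, k ∈ S ↔ Relation.ReflTransGen Adj j (f k) := by
      intro k; simp [hSdef]
    have hzero : ∀ k ∈ S, ∀ l ∉ S, W l k = 0 := by
      intro k hk l hl
      by_contra hne
      have hadj : Adj (f k) (f l) := (hWA (f k) (f l)).2 ⟨k, l, rfl, rfl, hne⟩
      exact hl ((hmemS l).2 (((hmemS k).1 hk).tail hadj))
    have hcol : ∀ k, ∑ l, Complex.normSq (W l k) = 1 := by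
      intro k
      have h := congrArg (fun M => M k k) h1
      simp only [Matrix.mul_apply, Matrix.star_apply, Matrix.one_apply_eq] at h
      have h' : ∑ l, (Complex.normSq (W l k) : ℂ) = 1 := by
        rw [← h]
        refine Finset.sum_congr rfl fun l _ => ?_
        rw [Complex.normSq_eq_conj_mul_self]
        rfl
      exact_mod_cast h'
    have hrow : ∀ l, ∑ k, Complex.normSq (W l k) = 1 := by
      intro l
      have h := congrArg (fun M => M l l) h2
      simp only [Matrix.mul_apply, Matrix.star_apply, Matrix.one_apply_eq] at h
      have h' : ∑ k, (Complex.normSq (W l k) : ℂ) = 1 := by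
        rw [← h]
        refine Finset.sum_congr rfl fun k _ => ?_
        rw [← Complex.mul_conj]
        rfl
      exact_mod_cast h'
    -- block sums
    have hsum1 : ∑ k ∈ S, ∑ l ∈ S, Complex.normSq (W l k) = S.card := by
      have : ∀ k ∈ S, ∑ l ∈ S, Complex.normSq (W l k) = 1 := by
        intro k hk
        have hsplit := Finset.sum_add_sum_compl S (fun l => Complex.normSq (W l k))
        have hz : ∑ l ∈ Sᶜ, Complex.normSq (W l k) = 0 :=
          Finset.sum_eq_zero fun l hl => by
            rw [hzero k hk l (by simpa using hl)]; simp
        rw [hz, add_zero, hcol k] at hsplit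
        exact hsplit
      rw [Finset.sum_congr rfl this]
      simp
    have hsum2 : ∑ l ∈ S, ∑ k ∈ Sᶜ, Complex.normSq (W l k) = 0 := by
      have key : ∑ l ∈ S, (∑ k ∈ S, Complex.normSq (W l k)
          + ∑ k ∈ Sᶜ, Complex.normSq (W l k)) = S.card := by
        rw [Finset.sum_congr rfl (fun l _ => by
          rw [Finset.sum_add_sum_compl S (fun k => Complex.normSq (W l k)), hrow l])]
        simp
      rw [Finset.sum_add_distrib, Finset.sum_comm, hsum1] at key
      linarith
    obtain ⟨k, l, hk, hl, hne⟩ := (hWA i j).1 hij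
    have hlS : l ∈ S := (hmemS l).2 (by rw [hl])
    have hkS : k ∉ S := fun hkk => hrev (by rw [← hk]; exact (hmemS k).1 hkk)
    have : Complex.normSq (W l k) = 0 := by
      have hterm := (Finset.sum_eq_zero_iff_of_nonneg
        (fun l _ => Finset.sum_nonneg fun k _ => Complex.normSq_nonneg _)).1 hsum2 l hlS
      exact (Finset.sum_eq_zero_iff_of_nonneg
        (fun k _ => Complex.normSq_nonneg _)).1 hterm k (by simpa using hkS)
    exact hne (Complex.normSq_eq_zero.mp this)
  · intro hrev
    -- arcs
    let A := {p : V × V // Adj p.1 p.2}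
    have hcyc : ∀ a : A, ∃ (n : ℕ) (g : Fin (n + 1) → V),
        (∀ t, Adj (g t) (g (finRotate (n + 1) t))) ∧
        ∃ t, g t = a.1.1 ∧ g (finRotate (n + 1) t) = a.1.2 :=
      fun a => qw_cycle_fun a.2 (hrev _ _ a.2)
    choose n g hstep hwit using hcyc
    let Idx := (a : A) × Fin (n a + 1)
    let e : Idx ≃ Fin (Fintype.card Idx) := Fintype.equivFin Idx
    let σ : Idx ≃ Idx := Equiv.sigmaCongrRight (fun a => finRotate (n a + 1))
    let π : Fin (Fintype.card Idx) ≃ Fin (Fintype.card Idx) := e.symm.trans (σ.trans e)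
    let f : Fin (Fintype.card Idx) → V := fun k => g (e.symm k).1 (e.symm k).2
    let W : Matrix (Fin (Fintype.card Idx)) (Fin (Fintype.card Idx)) ℂ :=
      fun l k => if l = π k then 1 else 0
    have hWne : ∀ l k, W l k ≠ 0 ↔ l = π k := by
      intro l k
      constructor
      · intro h; by_contra hne; exact h (by simp [W, hne])
      · intro h; simp [W, h]
    have hfπ : ∀ k, e.symm (π k) = σ (e.symm k) := by
      intro k; simp [π]
    refine ⟨Fintype.card Idx, f, W, ?_, ?_, ?_⟩
    · -- surjective
      intro v
      obtain ⟨t, ht, -⟩ := hwit ⟨(v, v), hloop v⟩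
      exact ⟨e ⟨⟨(v, v), hloop v⟩, t⟩, by
        show g (e.symm (e ⟨⟨(v, v), hloop v⟩, t⟩)).1 (e.symm (e ⟨⟨(v, v), hloop v⟩, t⟩)).2 = v
        rw [Equiv.symm_apply_apply]
        exact ht⟩
    · -- unitary
      constructor
      · ext k k'
        simp only [Matrix.mul_apply, Matrix.star_apply, Matrix.one_apply]
        simp only [W]
        rw [Finset.sum_congr rfl (fun l _ => by
          rw [apply_ite (star : ℂ → ℂ), star_one, star_zero, ite_mul, one_mul, zero_mul])]
        rw [Finset.sum_ite_eq' Finset.univ (π k) (fun l => if l = π k' then (1:ℂ) else 0)]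
        simp [EmbeddingLike.apply_eq_iff_eq]
      · ext l l'
        simp only [Matrix.mul_apply, Matrix.star_apply, Matrix.one_apply]
        simp only [W]
        rw [Finset.sum_congr rfl (fun k _ => by
          rw [apply_ite (star : ℂ → ℂ), star_one, star_zero, mul_ite, mul_one, mul_zero])]
        have : ∀ k, (if l' = π k then if l = π k then (1:ℂ) else 0 else 0)
            = if k = π.symm l' then (if l = π k then (1:ℂ) else 0) else 0 := by
          intro k
          congr 1
          simp [Equiv.eq_symm_apply, eq_comm]
        rw [Finset.sum_congr rfl (fun k _ => this k)]
        rw [Finset.sum_ite_eq' Finset.univ (π.symm l') (fun k => if l = π k then (1:ℂ) else 0)]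
        simp [Equiv.apply_symm_apply, eq_comm]
    · -- pattern
      intro i j
      constructor
      · intro hij
        obtain ⟨t, ht1, ht2⟩ := hwit ⟨(i, j), hij⟩
        refine ⟨e ⟨⟨(i, j), hij⟩, t⟩, π (e ⟨⟨(i, j), hij⟩, t⟩), ?_, ?_, ?_⟩
        · show g (e.symm (e ⟨⟨(i, j), hij⟩, t⟩)).1 (e.symm (e ⟨⟨(i, j), hij⟩, t⟩)).2 = i
          rw [Equiv.symm_apply_apply]
          exact ht1
        · show g (e.symm (π (e ⟨⟨(i, j), hij⟩, t⟩))).1 (e.symm (π (e ⟨⟨(i, j), hij⟩, t⟩))).2 = j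
          rw [hfπ, Equiv.symm_apply_apply]
          exact ht2
        · rw [hWne]
      · rintro ⟨k, l, hk, hl, hne⟩
        rw [hWne] at hne
        subst hne
        have := hstep (e.symm k).1 (e.symm k).2
        rw [← hk, ← hl]
        show Adj (f k) (g (e.symm (π k)).1 (e.symm (π k)).2)
        rw [hfπ]
        exact this
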